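/- Let $(M,\eta,H)$ be a contact Hamiltonian system. A vector field $X$ on $M$ is a dynamical symmetry (i.e., $\eta([X_H,X]) = 0$) if and only if the function $f = -\eta(X)$ commutes with $H$ under the Jacobi bracket, i.e., $\{H, \eta(X)\} = 0$. -/
import Mathlib


/-- An algebraic (Lie–Rinehart style) model of the algebra of smooth functions `R`
and the module of vector fields `V` on a manifold, together with the Lie bracket of
vector fields and their action on functions by derivations. -/
structure VecCalc (R V : Type*) [CommRing R] [Algebra ℝ R]
    [AddCommGroup V] [Module R V] where
  /-- Lie bracket of vector fields. -/
  bk : V → V → V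
  /-- The action `X(f)` of a vector field on a function. -/
  act : V → R → R
  act_add_left : ∀ X Y f, act (X + Y) f = act X f + act Y f
  act_smul_left : ∀ (f : R) (X : V) (g : R), act (f • X) g = f * act X g
  act_add : ∀ X f g, act X (f + g) = act X f + act X g
  act_mul : ∀ X f g, act X (f * g) = act X f * g + f * act X g
  act_algebraMap : ∀ X (c : ℝ), act X (algebraMap ℝ R c) = 0
  bk_antisymm : ∀ X Y, bk X Y = - bk Y X
  bk_add_left : ∀ X Y Z, bk (X + Y) Z = bk X Z + bk Y Z
  bk_leibniz : ∀ X (f : R) Y, bk X (f • Y) = f • bk X Y + act X f • Y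
  act_bk : ∀ X Y f, act (bk X Y) f = act X (act Y f) - act Y (act X f)

namespace VecCalc

variable {R V : Type*} [CommRing R] [Algebra ℝ R] [AddCommGroup V] [Module R V]

/-- The exterior differential of a one-form: `dη(X,Y) = X(η(Y)) - Y(η(X)) - η([X,Y])`. -/
def dOne (C : VecCalc R V) (η : V →ₗ[R] R) (X Y : V) : R :=
  C.act X (η Y) - C.act Y (η X) - η (C.bk X Y)

/-- The musical map `♭` of a contact form: `♭(X) = i_X dη + η(X) η`, evaluated on `Y`. -/
def flatv (C : VecCalc R V) (η : V →ₗ[R] R) (X Y : V) : R :=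
  C.dOne η X Y + η X * η Y

/-- `Rb` is the Reeb vector field of the contact form `η`: `η(Rb) = 1`, `i_Rb dη = 0`. -/
def IsReeb (C : VecCalc R V) (η : V →ₗ[R] R) (Rb : V) : Prop :=
  η Rb = 1 ∧ ∀ Y, C.dOne η Rb Y = 0

/-- The Lie derivative of the one-form `η` along `X`, evaluated on `Y`:
`(L_X η)(Y) = X(η(Y)) - η([X,Y])`. -/
def lieOne (C : VecCalc R V) (η : V →ₗ[R] R) (X Y : V) : R :=
  C.act X (η Y) - η (C.bk X Y)

/-- The differential of a function, as an `R`-linear one-form. -/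
def dfun (C : VecCalc R V) (f : R) : V →ₗ[R] R where
  toFun X := C.act X f
  map_add' X Y := C.act_add_left X Y f
  map_smul' c X := by simpa using C.act_smul_left c X f

end VecCalc

namespace VecCalc

variable {R V : Type*} [CommRing R] [Algebra ℝ R] [AddCommGroup V] [Module R V]

/-- `♯_Λ α = ♯α - α(Rb) Rb`, where `sharp = ♯ = ♭⁻¹`. -/
def sharpLam (sharp : (V →ₗ[R] R) → V) (Rb : V) (α : V →ₗ[R] R) : V :=
  sharp α - α Rb • Rb

/-- The contact Hamiltonian vector field `X_f = ♯_Λ(df) - f Rb`. -/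
def XHam (C : VecCalc R V) (sharp : (V →ₗ[R] R) → V) (Rb : V) (f : R) : V :=
  sharpLam sharp Rb (C.dfun f) - f • Rb

/-- The Jacobi bracket of the contact manifold:
`{f, g} = Λ(df, dg) - f Rb(g) + g Rb(f)`, where `Λ(α, β) = -dη(♯α, ♯β)`. -/
def jbr (C : VecCalc R V) (η : V →ₗ[R] R) (sharp : (V →ₗ[R] R) → V) (Rb : V)
    (f g : R) : R :=
  -(C.dOne η (sharp (C.dfun f)) (sharp (C.dfun g))) - f * C.act Rb g + g * C.act Rb f

end VecCalc

namespace VecCalc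

variable {R V : Type*} [CommRing R] [Algebra ℝ R] [AddCommGroup V] [Module R V]

lemma act_zero' (C : VecCalc R V) (X : V) : C.act X (0 : R) = 0 := by
  have h := C.act_add X 0 0
  rw [add_zero] at h
  exact left_eq_add.mp h

lemma act_neg' (C : VecCalc R V) (X : V) (f : R) : C.act X (-f) = - C.act X f := by
  have h := C.act_add X f (-f)
  rw [add_neg_cancel, C.act_zero'] at h
  linear_combination -h

lemma act_sub' (C : VecCalc R V) (X : V) (f g : R) :
    C.act X (f - g) = C.act X f - C.act X g := by
  rw [sub_eq_add_neg, C.act_add, C.act_neg']; ring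

lemma act_sub_left' (C : VecCalc R V) (X Y : V) (f : R) :
    C.act (X - Y) f = C.act X f - C.act Y f := by
  have : X - Y = X + (-1 : R) • Y := by rw [neg_one_smul]; abel
  rw [this, C.act_add_left, C.act_smul_left]; ring

lemma eta_bk_smul_left' (C : VecCalc R V) (η : V →ₗ[R] R) (f : R) (X Y : V) :
    η (C.bk (f • X) Y) = f * η (C.bk X Y) - C.act Y f * η X := by
  rw [C.bk_antisymm (f • X) Y, C.bk_leibniz, map_neg, map_add, map_smul, map_smul,
    smul_eq_mul, smul_eq_mul, C.bk_antisymm X Y, map_neg]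
  ring

lemma dOne_antisymm' (C : VecCalc R V) (η : V →ₗ[R] R) (X Y : V) :
    C.dOne η X Y = - C.dOne η Y X := by
  unfold dOne
  rw [C.bk_antisymm X Y, map_neg]; ring

lemma dOne_smul_left' (C : VecCalc R V) (η : V →ₗ[R] R) (f : R) (X Y : V) :
    C.dOne η (f • X) Y = f * C.dOne η X Y := by
  unfold dOne
  rw [C.act_smul_left, map_smul, smul_eq_mul, C.act_mul, C.eta_bk_smul_left']
  ring

lemma dOne_sub_left' (C : VecCalc R V) (η : V →ₗ[R] R) (X Y Z : V) :
    C.dOne η (X - Y) Z = C.dOne η X Z - C.dOne η Y Z := by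
  unfold dOne
  have h3 : C.act Z (-1 : R) = 0 := by
    have := C.act_algebraMap Z (-1)
    simpa using this
  have hbk : C.bk (X - Y) Z = C.bk X Z - C.bk Y Z := by
    have hXY : X - Y = X + (-1 : R) • Y := by rw [neg_one_smul]; abel
    have h2 : C.bk ((-1 : R) • Y) Z = - C.bk Y Z := by
      rw [C.bk_antisymm ((-1 : R) • Y) Z, C.bk_leibniz, h3, zero_smul, add_zero,
        neg_one_smul, neg_neg]
      exact C.bk_antisymm Z Y
    rw [hXY, C.bk_add_left, h2, sub_eq_add_neg]
  rw [C.act_sub_left', map_sub, C.act_sub', hbk, map_sub]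
  ring

lemma flatv_smul_left' (C : VecCalc R V) (η : V →ₗ[R] R) (f : R) (X Y : V) :
    C.flatv η (f • X) Y = f * C.flatv η X Y := by
  unfold flatv
  rw [C.dOne_smul_left', map_smul, smul_eq_mul]; ring

lemma flatv_sub_left' (C : VecCalc R V) (η : V →ₗ[R] R) (X Y Z : V) :
    C.flatv η (X - Y) Z = C.flatv η X Z - C.flatv η Y Z := by
  unfold flatv
  rw [C.dOne_sub_left', map_sub]; ring

lemma flatv_Rb' (C : VecCalc R V) (η : V →ₗ[R] R) (Rb : V) (hRb : C.IsReeb η Rb) (Y : V) :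
    C.flatv η Rb Y = η Y := by
  unfold flatv
  rw [hRb.2 Y, hRb.1]; ring

lemma eta_sharp' (C : VecCalc R V) (η : V →ₗ[R] R) (Rb : V) (hRb : C.IsReeb η Rb)
    (sharp : (V →ₗ[R] R) → V)
    (hsharp : ∀ (α : V →ₗ[R] R) (Y : V), C.flatv η (sharp α) Y = α Y)
    (α : V →ₗ[R] R) : η (sharp α) = α Rb := by
  have h := hsharp α Rb
  unfold flatv at h
  rw [C.dOne_antisymm', hRb.2, hRb.1] at h
  simpa using h

lemma flatv_XH' (C : VecCalc R V) (η : V →ₗ[R] R) (Rb : V) (hRb : C.IsReeb η Rb)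
    (sharp : (V →ₗ[R] R) → V)
    (hsharp : ∀ (α : V →ₗ[R] R) (Y : V), C.flatv η (sharp α) Y = α Y)
    (H : R) (Y : V) :
    C.flatv η (C.XHam sharp Rb H) Y = C.act Y H - (C.act Rb H + H) * η Y := by
  unfold XHam sharpLam
  rw [C.flatv_sub_left', C.flatv_sub_left', C.flatv_smul_left', C.flatv_smul_left',
    C.flatv_Rb' η Rb hRb, hsharp]
  have hd : C.dfun H Rb = C.act Rb H := rfl
  have hd2 : (C.dfun H) Y = C.act Y H := rfl
  rw [hd, hd2]
  ring

lemma eta_XH' (C : VecCalc R V) (η : V →ₗ[R] R) (Rb : V) (hRb : C.IsReeb η Rb)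
    (sharp : (V →ₗ[R] R) → V)
    (hsharp : ∀ (α : V →ₗ[R] R) (Y : V), C.flatv η (sharp α) Y = α Y)
    (H : R) : η (C.XHam sharp Rb H) = -H := by
  have h := C.flatv_XH' η Rb hRb sharp hsharp H Rb
  unfold flatv at h
  rw [C.dOne_antisymm', hRb.2, hRb.1] at h
  simpa using h

lemma key_identity' (C : VecCalc R V) (η : V →ₗ[R] R) (Rb : V) (hRb : C.IsReeb η Rb)
    (sharp : (V →ₗ[R] R) → V)
    (hsharp : ∀ (α : V →ₗ[R] R) (Y : V), C.flatv η (sharp α) Y = α Y)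
    (H : R) (X : V) :
    η (C.bk (C.XHam sharp Rb H) X) = C.jbr η sharp Rb H (η X) := by
  set f := η X with hf
  -- dOne XH X from flatv
  have hdXH : C.dOne η (C.XHam sharp Rb H) X = C.act X H - C.act Rb H * f := by
    have h := C.flatv_XH' η Rb hRb sharp hsharp H X
    unfold flatv at h
    rw [C.eta_XH' η Rb hRb sharp hsharp] at h
    linear_combination h
  -- η(bk XH X) = act XH f - act X (η XH) - dOne XH X
  have hbk : η (C.bk (C.XHam sharp Rb H) X)
      = C.act (C.XHam sharp Rb H) f - C.act X (η (C.XHam sharp Rb H))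
        - C.dOne η (C.XHam sharp Rb H) X := by
    unfold dOne; ring
  -- act of XH
  have hactXH : C.act (C.XHam sharp Rb H) f
      = C.act (sharp (C.dfun H)) f - C.act Rb H * C.act Rb f - H * C.act Rb f := by
    unfold XHam sharpLam
    rw [C.act_sub_left', C.act_sub_left', C.act_smul_left, C.act_smul_left]
    have hd : C.dfun H Rb = C.act Rb H := rfl
    rw [hd]
  -- jbr expansion
  have hsd : C.dOne η (sharp (C.dfun H)) (sharp (C.dfun f))
      = - C.act (sharp (C.dfun H)) f + C.act Rb f * C.act Rb H := by
    rw [C.dOne_antisymm']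
    have h := hsharp (C.dfun f) (sharp (C.dfun H))
    unfold flatv at h
    have h1 : η (sharp (C.dfun f)) = C.act Rb f :=
      C.eta_sharp' η Rb hRb sharp hsharp (C.dfun f)
    have h2 : η (sharp (C.dfun H)) = C.act Rb H :=
      C.eta_sharp' η Rb hRb sharp hsharp (C.dfun H)
    have h3 : (C.dfun f) (sharp (C.dfun H)) = C.act (sharp (C.dfun H)) f := rfl
    rw [h1, h2, h3] at h
    linear_combination -h
  rw [hbk, hdXH, hactXH, C.eta_XH' η Rb hRb sharp hsharp, C.act_neg']
  unfold jbr
  rw [hsd]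
  ring

end VecCalc

/-- For a contact Hamiltonian system `(M, η, H)`, a vector field `X` is a
dynamical symmetry, i.e. `η([X_H, X]) = 0`, if and only if the function `η(X)` commutes
with `H` under the Jacobi bracket, i.e. `{H, η(X)} = 0`. -/
theorem dynamical_symmetry_iff_commutes
    {R V : Type*} [CommRing R] [Algebra ℝ R] [AddCommGroup V] [Module R V]
    (C : VecCalc R V) (η : V →ₗ[R] R) (Rb : V) (hRb : C.IsReeb η Rb)
    (sharp : (V →ₗ[R] R) → V)
    (hsharp : ∀ (α : V →ₗ[R] R) (Y : V), C.flatv η (sharp α) Y = α Y)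
    (hflat_inj : ∀ X X' : V, (∀ Y, C.flatv η X Y = C.flatv η X' Y) → X = X')
    (H : R) :
    ∀ X : V, η (C.bk (C.XHam sharp Rb H) X) = 0 ↔ C.jbr η sharp Rb H (η X) = 0 := by
  intro X
  rw [VecCalc.key_identity' C η Rb hRb sharp hsharp H X]
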